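/- Let n ≥ 1, let L₁,…,Lₙ > 0, S > 0, t > 0, P > 0, and let 0 < pᵢ ≤ P for i = 1,…,n. Let μ be the product on ℝⁿ of n copies of the exponential distribution with rate 1. Then μ{λ ∈ ℝⁿ : ∑_{i=1}^n Lᵢ·log₂(1 + S·λᵢ·pᵢ) < t} ≤ (∏_{i=1}^n P/pᵢ) · μ{λ ∈ ℝⁿ : ∑_{i=1}^n Lᵢ·log₂(1 + S·λᵢ·P) < t}. -/

import Mathlib

open MeasureTheory ProbabilityTheory Real
open scoped ENNReal NNReal

section Aux

open Set

/-- pointwise comparison of exponential pdfs under scaling up of the argument. -/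
lemma expPDF_scale_le {c : ℝ} (hc0 : 0 < c) (hc1 : c ≤ 1) (y : ℝ) :
    exponentialPDF 1 (c⁻¹ * y) ≤ exponentialPDF 1 y := by
  rcases lt_or_ge y 0 with hy | hy
  · rw [exponentialPDF_of_neg (mul_neg_of_pos_of_neg (inv_pos.2 hc0) hy), exponentialPDF_of_neg hy]
  · have hcy : (0:ℝ) ≤ c⁻¹ * y := by positivity
    rw [exponentialPDF_of_nonneg hcy, exponentialPDF_of_nonneg hy]
    apply ENNReal.ofReal_le_ofReal
    simp only [one_mul]
    apply Real.exp_le_exp.2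
    have : y ≤ c⁻¹ * y := le_mul_of_one_le_left hy ((one_le_inv₀ hc0).2 hc1)
    linarith

lemma expMeasure_eq_withDensity :
    expMeasure 1 = (volume : Measure ℝ).withDensity (exponentialPDF 1) := rfl

/-- One-dimensional key estimate: pushing forward the exponential measure by
multiplication by `c ∈ (0,1]` gives a measure bounded by `c⁻¹` times the exponential measure. -/
lemma map_expMeasure_le {c : ℝ} (hc0 : 0 < c) (hc1 : c ≤ 1) :
    (expMeasure 1).map (fun x => c * x) ≤ (ENNReal.ofReal c⁻¹) • expMeasure 1 := by
  rw [Measure.le_iff]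
  intro s hs
  rw [Measure.map_apply (measurable_const_mul c) hs, Measure.smul_apply, smul_eq_mul,
    expMeasure_eq_withDensity, withDensity_apply _ (hs.preimage (measurable_const_mul c)),
    withDensity_apply _ hs]
  set g : ℝ → ℝ≥0∞ := s.indicator (fun y => exponentialPDF 1 (c⁻¹ * y)) with hg
  have hgm : Measurable g := by
    apply Measurable.indicator _ hs
    exact (measurable_exponentialPDFReal 1).ennreal_ofReal.comp (measurable_const_mul _)
  have key : ∀ x : ℝ, ((fun x => c * x) ⁻¹' s).indicator (exponentialPDF 1) x = g (c * x) := by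
    intro x
    by_cases hx : c * x ∈ s
    · have hx' : x ∈ (fun x => c * x) ⁻¹' s := hx
      rw [Set.indicator_of_mem hx', hg, Set.indicator_of_mem hx]
      congr 1
      field_simp
    · have hx' : x ∉ (fun x => c * x) ⁻¹' s := hx
      rw [Set.indicator_of_notMem hx', hg, Set.indicator_of_notMem hx]
  calc ∫⁻ x in (fun x => c * x) ⁻¹' s, exponentialPDF 1 x ∂volume
      = ∫⁻ x, g (c * x) ∂volume := by
        rw [← lintegral_indicator (hs.preimage (measurable_const_mul c))]
        exact lintegral_congr key
    _ = ∫⁻ y, g y ∂(volume.map (fun x => c * x)) :=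
        (lintegral_map hgm (measurable_const_mul c)).symm
    _ = ENNReal.ofReal |c⁻¹| * ∫⁻ y, g y ∂volume := by
        rw [Real.map_volume_mul_left (ne_of_gt hc0), lintegral_smul_measure, smul_eq_mul]
    _ ≤ ENNReal.ofReal c⁻¹ * ∫⁻ y in s, exponentialPDF 1 y ∂volume := by
        rw [abs_of_pos (by positivity)]
        apply mul_le_mul_right
        rw [hg, lintegral_indicator hs]
        exact lintegral_mono fun y => expPDF_scale_le hc0 hc1 y

/-- monotonicity of product measures up to scalar factors. -/
lemma pi_le_smul_pi {ι : Type*} [Fintype ι] {α : ι → Type*} [∀ i, MeasurableSpace (α i)]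
    (ν μ : ∀ i, Measure (α i)) (k : ι → ℝ≥0∞) (hk : ∀ i, k i ≠ ∞)
    (h : ∀ i, ν i ≤ k i • μ i) {s : Set (∀ i, α i)} (hs : MeasurableSet s) :
    Measure.pi ν s ≤ (∏ i, k i) * Measure.pi μ s := by
  have houter : OuterMeasure.pi (fun i => (ν i).toOuterMeasure)
      ≤ (∏ i, k i) • OuterMeasure.pi (fun i => (μ i).toOuterMeasure) := by
    rw [OuterMeasure.pi, OuterMeasure.pi,
      OuterMeasure.smul_boundedBy (ENNReal.prod_ne_top fun i _ => hk i)]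
    refine OuterMeasure.le_boundedBy.2 fun t => ?_
    refine (OuterMeasure.boundedBy_le t).trans ?_
    have : piPremeasure (fun i => (ν i).toOuterMeasure) t
        ≤ (∏ i, k i) * piPremeasure (fun i => (μ i).toOuterMeasure) t := by
      rw [piPremeasure, piPremeasure, ← Finset.prod_mul_distrib]
      refine Finset.prod_le_prod' fun i _ => ?_
      have := Measure.le_iff'.1 (h i) (Function.eval i '' t)
      simpa [Measure.smul_apply, smul_eq_mul] using this
    exact this
  rw [Measure.pi_def, Measure.pi_def, toMeasure_apply _ _ hs, toMeasure_apply _ _ hs]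
  exact (houter s).trans (le_of_eq rfl)

/-- pushforward of a product measure by a coordinatewise map. -/
lemma pi_map_coord {ι : Type*} [Fintype ι] (μ : ι → Measure ℝ) [∀ i, SigmaFinite (μ i)]
    (c : ι → ℝ) (hc : ∀ i, SigmaFinite ((μ i).map (fun x => c i * x))) :
    (Measure.pi μ).map (fun x i => c i * x i)
      = Measure.pi (fun i => (μ i).map (fun x => c i * x)) := by
  haveI := hc
  refine (Measure.pi_eq fun s hs => ?_).symm
  have hT : Measurable (fun (x : ι → ℝ) i => c i * x i) :=
    measurable_pi_lambda _ fun i => (measurable_pi_apply i).const_mul _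
  rw [Measure.map_apply hT (MeasurableSet.univ_pi hs)]
  have : (fun (x : ι → ℝ) i => c i * x i) ⁻¹' Set.pi Set.univ s
      = Set.pi Set.univ (fun i => (fun x => c i * x) ⁻¹' s i) := by
    ext x; simp [Set.mem_pi]
  rw [this, Measure.pi_pi]
  exact Finset.prod_congr rfl fun i _ =>
    (Measure.map_apply (measurable_const_mul (c i)) (hs i)).symm

end Aux

theorem outage_bound_rayleigh
    (n : ℕ) (hn : 1 ≤ n) (L : Fin n → ℝ) (hL : ∀ i, 0 < L i)
    (S t P : ℝ) (hS : 0 < S) (ht : 0 < t) (hP : 0 < P)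
    (p : Fin n → ℝ) (hp : ∀ i, 0 < p i) (hpP : ∀ i, p i ≤ P)
    (μ : Measure (Fin n → ℝ))
    (hμ : μ = Measure.pi fun _ : Fin n => expMeasure 1) :
    μ {lam : Fin n → ℝ | ∑ i, L i * Real.logb 2 (1 + S * lam i * p i) < t}
      ≤ ENNReal.ofReal (∏ i, P / p i) *
        μ {lam : Fin n → ℝ | ∑ i, L i * Real.logb 2 (1 + S * lam i * P) < t} := by
  subst hμ
  set B : Set (Fin n → ℝ) :=
    {lam : Fin n → ℝ | ∑ i, L i * Real.logb 2 (1 + S * lam i * P) < t} with hB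
  set T : (Fin n → ℝ) → (Fin n → ℝ) := fun x i => (p i / P) * x i with hTdef
  have hTm : Measurable T :=
    measurable_pi_lambda _ fun i => (measurable_pi_apply i).const_mul _
  have hBm : MeasurableSet B := by
    have : Measurable fun lam : Fin n → ℝ =>
        ∑ i, L i * Real.logb 2 (1 + S * lam i * P) := by
      apply Finset.measurable_sum
      intro i _
      apply Measurable.const_mul
      have h1 : Measurable fun lam : Fin n → ℝ => 1 + S * lam i * P :=
        by fun_prop
      exact (Real.measurable_log.comp h1).div_const _
    exact measurableSet_lt this measurable_const
  have hpre : T ⁻¹' B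
      = {lam : Fin n → ℝ | ∑ i, L i * Real.logb 2 (1 + S * lam i * p i) < t} := by
    ext lam
    simp only [Set.mem_preimage, hB, Set.mem_setOf_eq, hTdef]
    have : ∀ i, S * (p i / P * lam i) * P = S * lam i * p i := by
      intro i
      field_simp
    rw [Finset.sum_congr rfl fun i _ => by rw [this i]]
  -- instances
  haveI : IsProbabilityMeasure (expMeasure 1) := isProbabilityMeasure_expMeasure one_pos
  haveI hmapped : ∀ i : Fin n,
      IsProbabilityMeasure ((expMeasure 1).map (fun x => (p i / P) * x)) := fun i =>
    Measure.isProbabilityMeasure_map (measurable_const_mul _).aemeasurable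
  calc (Measure.pi fun _ : Fin n => expMeasure 1)
        {lam : Fin n → ℝ | ∑ i, L i * Real.logb 2 (1 + S * lam i * p i) < t}
      = (Measure.pi fun _ : Fin n => expMeasure 1) (T ⁻¹' B) := by rw [hpre]
    _ = ((Measure.pi fun _ : Fin n => expMeasure 1).map T) B :=
        (Measure.map_apply hTm hBm).symm
    _ = (Measure.pi fun i => (expMeasure 1).map (fun x => (p i / P) * x)) B := by
        rw [hTdef, pi_map_coord _ _ (fun i => inferInstance)]
    _ ≤ (∏ i, ENNReal.ofReal ((p i / P)⁻¹)) *
          (Measure.pi fun _ : Fin n => expMeasure 1) B := by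
        apply pi_le_smul_pi _ _ _ (fun i => ENNReal.ofReal_ne_top) _ hBm
        intro i
        exact map_expMeasure_le (div_pos (hp i) hP) ((div_le_one hP).2 (hpP i))
    _ = ENNReal.ofReal (∏ i, P / p i) *
          (Measure.pi fun _ : Fin n => expMeasure 1) B := by
        congr 1
        rw [← ENNReal.ofReal_prod_of_nonneg]
        · exact congrArg ENNReal.ofReal (Finset.prod_congr rfl fun i _ => by
            rw [inv_div])
        · intro i _
          exact inv_nonneg.2 (div_pos (hp i) hP).le
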